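/- arXiv:math/0207081 — 3 statements merged into one kernel-verified Lean document; each statement's English description precedes it below -/
import Mathlib

section
/- Non-Archimedean maximum modulus principle: let k be an algebraically closed field complete with respect to a nontrivial non-Archimedean absolute value, let r ∈ |k*|, and let f = Σ_{n≥0} aₙ zⁿ satisfy |aₙ| rⁿ → 0. Then sup_n |aₙ| rⁿ = sup { |f(z)| : z ∈ k, |z| = r }, and this supremum is attained at some z with |z| = r. -/
open Filter

lemma exists_max_of_tendsto_zero {f : ℕ → ℝ} (h0 : ∀ n, 0 ≤ f n)
    (h : Tendsto f atTop (nhds 0)) : ∃ N, ∀ n, f n ≤ f N := by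
  by_cases hz : ∀ n, f n = 0
  · exact ⟨0, fun n => by rw [hz n, hz 0]⟩
  · push_neg at hz
    obtain ⟨m, hm⟩ := hz
    have hm' : 0 < f m := lt_of_le_of_ne (h0 m) (Ne.symm hm)
    obtain ⟨K, hK⟩ := (eventually_atTop.mp (h.eventually (gt_mem_nhds hm')))
    have hs : (insert m (Finset.range (K+1))).Nonempty := ⟨m, Finset.mem_insert_self _ _⟩
    obtain ⟨N, hNmem, hN⟩ := Finset.exists_max_image _ f hs
    refine ⟨N, fun n => ?_⟩
    rcases le_or_gt n K with hn | hn
    · exact hN n (Finset.mem_insert_of_mem (Finset.mem_range.mpr (Nat.lt_succ_of_le hn)))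
    · exact le_trans (le_of_lt (hK n hn.le)) (hN m (Finset.mem_insert_self _ _))

lemma multiset_norm_prod {k : Type*} [NormedField k] (s : Multiset k) :
    ‖s.prod‖ = (s.map fun x => ‖x‖).prod := by
  induction s using Multiset.induction with
  | empty => simp
  | cons a s ih => simp [norm_mul, ih]

lemma multiset_prod_le_one {s : Multiset ℝ} (h : ∀ x ∈ s, 0 ≤ x ∧ x ≤ 1) :
    0 ≤ s.prod ∧ s.prod ≤ 1 := by
  induction s using Multiset.induction with
  | empty => simp
  | cons a s ih =>
    have ha := h a (Multiset.mem_cons_self _ _)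
    have hs := ih (fun x hx => h x (Multiset.mem_cons_of_mem hx))
    rw [Multiset.prod_cons]
    constructor
    · exact mul_nonneg ha.1 hs.1
    · calc a * s.prod ≤ 1 * 1 := mul_le_mul ha.2 hs.2 hs.1 zero_le_one
        _ = 1 := one_mul 1

lemma norm_add_eq_right' {k : Type*} [NormedAddCommGroup k] [IsUltrametricDist k]
    {x y : k} (h : ‖x‖ < ‖y‖) : ‖x + y‖ = ‖y‖ := by
  rw [IsUltrametricDist.norm_add_eq_max_of_norm_ne_norm (ne_of_lt h), max_eq_right h.le]

lemma norm_add_eq_left' {k : Type*} [NormedAddCommGroup k] [IsUltrametricDist k]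
    {x y : k} (h : ‖y‖ < ‖x‖) : ‖x + y‖ = ‖x‖ := by
  rw [add_comm]; exact norm_add_eq_right' h

lemma exists_far_unit (k : Type*) [NontriviallyNormedField k] [IsAlgClosed k]
    [IsUltrametricDist k] : ∃ u : k, ‖u‖ = 1 ∧ ‖1 - u‖ = 1 := by
  by_cases h3 : ‖(3 : k)‖ = 1
  · have hdeg : (Polynomial.X ^ 2 + Polynomial.X + 1 : Polynomial k).degree ≠ 0 := by
      have : (Polynomial.X ^ 2 + Polynomial.X + 1 : Polynomial k).degree = 2 := by
        compute_degree!
      rw [this]; norm_num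
    obtain ⟨ω, hω⟩ := IsAlgClosed.exists_root (Polynomial.X ^ 2 + Polynomial.X + 1 : Polynomial k) hdeg
    rw [Polynomial.IsRoot.def] at hω
    simp only [Polynomial.eval_add, Polynomial.eval_pow, Polynomial.eval_X,
      Polynomial.eval_one] at hω
    have h3' : ω ^ 3 = 1 := by linear_combination (ω - 1) * hω
    have hn : ‖ω‖ = 1 := by
      have h1 : ‖ω‖ ^ 3 = 1 := by rw [← norm_pow, h3', norm_one]
      nlinarith [norm_nonneg ω, sq_nonneg (‖ω‖ - 1), sq_nonneg (‖ω‖ + 1)]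
    have hprod : (1 - ω) * (1 - ω ^ 2) = 3 := by linear_combination (ω - 2) * hω
    have hle1 : ‖1 - ω‖ ≤ 1 := by
      rw [sub_eq_add_neg]
      refine (IsUltrametricDist.norm_add_le_max 1 (-ω)).trans ?_
      simp [hn]
    have hle2 : ‖1 - ω ^ 2‖ ≤ 1 := by
      rw [sub_eq_add_neg]
      refine (IsUltrametricDist.norm_add_le_max 1 (-(ω ^ 2))).trans ?_
      simp [norm_pow, hn]
    have hmul : ‖1 - ω‖ * ‖1 - ω ^ 2‖ = 1 := by
      rw [← norm_mul, hprod, h3]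
    refine ⟨ω, hn, le_antisymm hle1 ?_⟩
    calc (1 : ℝ) = ‖1 - ω‖ * ‖1 - ω ^ 2‖ := hmul.symm
      _ ≤ ‖1 - ω‖ * 1 := mul_le_mul_of_nonneg_left hle2 (norm_nonneg _)
      _ = ‖1 - ω‖ := mul_one _
  · have h3lt : ‖(3 : k)‖ < 1 :=
      lt_of_le_of_ne (IsUltrametricDist.norm_natCast_le_one k 3) h3
    have h2 : ‖(2 : k)‖ = 1 := by
      have he : (2 : k) = 3 + (-1) := by norm_num
      rw [he, norm_add_eq_right' (by simpa using h3lt)]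
      simp
    refine ⟨-1, by simp, ?_⟩
    rw [sub_neg_eq_add]
    have he : (1 : k) + 1 = 2 := by norm_num
    rw [he, h2]

/-- Non-Archimedean maximum modulus principle: for `r = ‖c‖` in the value group and a
power series with `‖aₙ‖ rⁿ → 0`, the Gauss norm `sup_n ‖aₙ‖ rⁿ` equals the supremum of
`‖f(z)‖` over `‖z‖ = r`, and this supremum is attained. -/
theorem max_modulus_principle
    (k : Type*) [NontriviallyNormedField k] [IsAlgClosed k] [CompleteSpace k]
    [IsUltrametricDist k]
    (a : ℕ → k) (c : k) (hc : c ≠ 0) (r : ℝ) (hr : r = ‖c‖)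
    (hdecay : Tendsto (fun n => ‖a n‖ * r ^ n) atTop (nhds 0)) :
    (∀ z : k, ‖z‖ = r → ‖∑' n : ℕ, a n * z ^ n‖ ≤ ⨆ n : ℕ, ‖a n‖ * r ^ n) ∧
    (∃ z : k, ‖z‖ = r ∧ ‖∑' n : ℕ, a n * z ^ n‖ = ⨆ n : ℕ, ‖a n‖ * r ^ n) := by
  classical
  set b : ℕ → k := fun n => a n * c ^ n with hbdef
  have hbn : ∀ n, ‖b n‖ = ‖a n‖ * r ^ n := by
    intro n; rw [hbdef]; simp [norm_mul, norm_pow, hr]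
  have hb : Tendsto (fun n => ‖b n‖) atTop (nhds 0) := by
    have : (fun n => ‖b n‖) = fun n => ‖a n‖ * r ^ n := funext hbn
    rw [this]; exact hdecay
  obtain ⟨N0, hN0⟩ := exists_max_of_tendsto_zero (fun n => norm_nonneg _) hb
  set M : ℝ := ‖b N0‖ with hMdef
  have hMnonneg : 0 ≤ M := norm_nonneg _
  have hbddM : BddAbove (Set.range fun n => ‖a n‖ * r ^ n) := by
    refine ⟨M, ?_⟩; rintro x ⟨n, rfl⟩; exact le_of_eq_of_le (hbn n).symm (hN0 n)
  have hMsup : (⨆ n : ℕ, ‖a n‖ * r ^ n) = M := by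
    apply le_antisymm
    · exact ciSup_le (fun n => by rw [← hbn]; exact hN0 n)
    · exact le_of_eq_of_le (hbn N0) (le_ciSup hbddM N0)
  have hbound : ∀ z : k, ‖z‖ = r → ‖∑' n : ℕ, a n * z ^ n‖ ≤ ⨆ n : ℕ, ‖a n‖ * r ^ n := by
    intro z hz
    rw [hMsup]
    refine IsUltrametricDist.norm_tsum_le_of_forall_le_of_nonneg hMnonneg (fun n => ?_)
    rw [norm_mul, norm_pow, hz, ← hbn]
    exact hN0 n
  refine ⟨hbound, ?_⟩
  rcases eq_or_lt_of_le hMnonneg with hM0 | hMpos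
  · -- all coefficients vanish
    refine ⟨c, hr.symm, ?_⟩
    have hz : ∀ n, a n * c ^ n = 0 := by
      intro n
      have h1 : ‖b n‖ ≤ 0 := le_of_le_of_eq (hN0 n) hM0.symm
      have hb0 : b n = 0 := norm_le_zero_iff.mp h1
      rw [hbdef] at hb0; exact hb0
    rw [hMsup, ← hM0]
    simp [hz]
  · -- index of largest coefficient
    obtain ⟨K, hK⟩ := eventually_atTop.mp (hb.eventually (gt_mem_nhds hMpos))
    set S : Finset ℕ := (Finset.range K).filter (fun n => ‖b n‖ = M) with hSdef
    have hN0S : N0 ∈ S := by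
      refine Finset.mem_filter.mpr ⟨Finset.mem_range.mpr ?_, rfl⟩
      by_contra h
      exact absurd (hK N0 (not_lt.mp h)) (lt_irrefl M)
    have hSne : S.Nonempty := ⟨N0, hN0S⟩
    set N := S.max' hSne with hNdef
    have hbN : ‖b N‖ = M := (Finset.mem_filter.mp (S.max'_mem hSne)).2
    have hlt : ∀ n, N < n → ‖b n‖ < M := by
      intro n hn
      rcases lt_or_ge n K with h | h
      · rcases lt_or_eq_of_le (hN0 n) with h' | h'
        · exact h'
        · exact absurd (S.le_max' n (Finset.mem_filter.mpr ⟨Finset.mem_range.mpr h, h'⟩))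
            (not_le.mpr hn)
      · exact hK n h
    obtain ⟨n₁, hn₁⟩ := exists_max_of_tendsto_zero
      (f := fun n => ‖b (n + (N+1))‖) (fun n => norm_nonneg _)
      (hb.comp (tendsto_add_atTop_nat (N+1)))
    set M' : ℝ := ‖b (n₁ + (N+1))‖ with hM'def
    have hM'M : M' < M := hlt _ (by omega)
    have htail : ∀ w : k, ‖w‖ ≤ 1 →
        ‖∑' n : ℕ, b (n + (N+1)) * w ^ (n + (N+1))‖ ≤ M' := by
      intro w hw
      refine IsUltrametricDist.norm_tsum_le_of_forall_le_of_nonneg (norm_nonneg _)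
        (fun n => ?_)
      rw [norm_mul, norm_pow]
      calc ‖b (n+(N+1))‖ * ‖w‖ ^ (n+(N+1)) ≤ ‖b (n+(N+1))‖ * 1 :=
            mul_le_mul_of_nonneg_left (pow_le_one₀ (norm_nonneg w) hw) (norm_nonneg _)
        _ = ‖b (n+(N+1))‖ := mul_one _
        _ ≤ M' := hn₁ n
    have hsum : ∀ w : k, ‖w‖ ≤ 1 → Summable (fun n => b n * w ^ n) := by
      intro w hw
      refine NonarchimedeanAddGroup.summable_of_tendsto_cofinite_zero ?_
      rw [Nat.cofinite_eq_atTop, tendsto_zero_iff_norm_tendsto_zero]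
      refine squeeze_zero (fun n => norm_nonneg _) (fun n => ?_) hb
      rw [norm_mul, norm_pow]
      calc ‖b n‖ * ‖w‖ ^ n ≤ ‖b n‖ * 1 :=
            mul_le_mul_of_nonneg_left (pow_le_one₀ (norm_nonneg w) hw) (norm_nonneg _)
        _ = ‖b n‖ := mul_one _
    have key : ∃ w : k, ‖w‖ = 1 ∧ ‖∑ i ∈ Finset.range (N+1), b i * w ^ i‖ = M := by
      rcases Nat.eq_zero_or_pos N with hN | hNpos
      · refine ⟨1, norm_one, ?_⟩
        rw [hN] at hbN ⊢
        simpa using hbN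
      · obtain ⟨u, hu1, hu2⟩ := exists_far_unit k
        set d : k := if ‖b 0‖ < M then b N else b 0 * u with hddef
        have hd : ‖d‖ = M ∧ ‖b 0 - d‖ = M := by
          rw [hddef]; split_ifs with h
          · refine ⟨hbN, ?_⟩
            rw [sub_eq_add_neg, norm_add_eq_right' (by rw [norm_neg, hbN]; exact h),
              norm_neg, hbN]
          · have h0 : ‖b 0‖ = M := le_antisymm (hN0 0) (not_lt.mp h)
            refine ⟨by rw [norm_mul, hu1, h0, mul_one], ?_⟩
            have he : b 0 - b 0 * u = b 0 * (1 - u) := by ring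
            rw [he, norm_mul, hu2, h0, mul_one]
        set P : Polynomial k :=
          (∑ i ∈ Finset.range (N+1), Polynomial.C (b i) * Polynomial.X ^ i)
            - Polynomial.C d with hPdef
        have hcoeff : ∀ j, P.coeff j =
            (if j < N + 1 then b j else 0) - (if j = 0 then d else 0) := by
          intro j
          rw [hPdef, Polynomial.coeff_sub, Polynomial.finset_sum_coeff]
          congr 1
          · simp only [Polynomial.coeff_C_mul, Polynomial.coeff_X_pow, mul_ite, mul_one,
              mul_zero]
            rw [Finset.sum_ite_eq (Finset.range (N+1)) j b]
            simp [Finset.mem_range]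
          · simp [Polynomial.coeff_C]
        have hevalP : ∀ x : k, P.eval x = (∑ i ∈ Finset.range (N+1), b i * x ^ i) - d := by
          intro x
          rw [hPdef]
          simp [Polynomial.eval_finset_sum]
        have hbNne : b N ≠ 0 := by
          intro h; rw [h, norm_zero] at hbN; exact absurd hbN (ne_of_lt hMpos)
        have hcoeffN : P.coeff N = b N := by
          rw [hcoeff]
          simp [Nat.lt_succ_self, hNpos.ne']
        have hcoeff0 : P.coeff 0 = b 0 - d := by
          rw [hcoeff]; simp
        have hdegle : P.natDegree ≤ N := by
          refine Polynomial.natDegree_le_iff_coeff_eq_zero.mpr (fun m hm => ?_)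
          rw [hcoeff]
          have h1 : ¬ m < N + 1 := by omega
          have h2 : m ≠ 0 := by omega
          simp [h1, h2]
        have hdeg : P.natDegree = N :=
          le_antisymm hdegle (Polynomial.le_natDegree_of_ne_zero (hcoeffN ▸ hbNne))
        have hPne : P ≠ 0 := fun h => hbNne (by rw [← hcoeffN, h, Polynomial.coeff_zero])
        have hlead : P.leadingCoeff = b N := by
          rw [Polynomial.leadingCoeff, hdeg, hcoeffN]
        have hsplits : Polynomial.Splits P := IsAlgClosed.splits P
        have hfact := hsplits.eq_prod_roots
        have hcard : Multiset.card P.roots = N := by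
          rw [Polynomial.splits_iff_card_roots.mp hsplits, hdeg]
        have hcoeffle : ∀ i, i ≤ N → ‖b i‖ ≤ M := fun i _ => hN0 i
        -- all roots have norm at most one
        have hroots_le : ∀ α ∈ P.roots, ‖α‖ ≤ 1 := by
          intro α hα
          have hαroot : P.eval α = 0 := (Polynomial.mem_roots hPne).mp hα
          by_contra hgt
          push_neg at hgt
          have hsd : ∑ i ∈ Finset.range (N+1), b i * α ^ i = d := by
            have := hevalP α
            rw [hαroot] at this
            exact sub_eq_zero.mp this.symm
          have hsmall : ‖∑ i ∈ Finset.range N, b i * α ^ i‖ ≤ M * ‖α‖ ^ (N - 1) := by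
            refine IsUltrametricDist.norm_sum_le_of_forall_le_of_nonneg (by positivity)
              (fun i hi => ?_)
            rw [norm_mul, norm_pow]
            have hi' : i ≤ N - 1 := by
              have := Finset.mem_range.mp hi; omega
            exact mul_le_mul (hN0 i) (pow_le_pow_right₀ hgt.le hi') (by positivity) hMnonneg
          have hbig : M * ‖α‖ ^ (N - 1) < ‖b N * α ^ N‖ := by
            rw [norm_mul, norm_pow, hbN]
            refine mul_lt_mul_of_pos_left ?_ hMpos
            exact pow_lt_pow_right₀ hgt (by omega)
          have heq : ‖∑ i ∈ Finset.range (N+1), b i * α ^ i‖ = ‖b N * α ^ N‖ := by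
            rw [Finset.sum_range_succ, norm_add_eq_right' (lt_of_le_of_lt hsmall hbig)]
          rw [hsd, hd.1, norm_mul, norm_pow, hbN] at heq
          have h1 : (1:ℝ) < ‖α‖ ^ N := one_lt_pow₀ hgt hNpos.ne'
          nlinarith
        -- product of root norms is one
        have hprod : (P.roots.map fun α => ‖α‖).prod = 1 := by
          have he0 : P.eval 0 = b 0 - d := by
            rw [← Polynomial.coeff_zero_eq_eval_zero, hcoeff0]
          have he1 : P.eval 0 = b N * (P.roots.map fun α => -α).prod := by
            conv_lhs => rw [hfact]
            rw [Polynomial.eval_mul, Polynomial.eval_C, hlead,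
              Polynomial.eval_multiset_prod, Multiset.map_map]
            congr 2
            apply Multiset.map_congr rfl
            intro x _
            simp
          have hnorm : M = M * (P.roots.map fun α => ‖α‖).prod := by
            calc M = ‖P.eval 0‖ := by rw [he0, hd.2]
              _ = ‖b N‖ * ‖(P.roots.map fun α => -α).prod‖ := by rw [he1, norm_mul]
              _ = M * ((P.roots.map fun α => -α).map fun x => ‖x‖).prod := by
                  rw [hbN, multiset_norm_prod]
              _ = M * (P.roots.map fun α => ‖α‖).prod := by
                  rw [Multiset.map_map]
                  congr 2
                  apply Multiset.map_congr rfl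
                  intro x _
                  simp
          have h2 : M * 1 = M * (P.roots.map fun α => ‖α‖).prod := by
            rw [mul_one]; exact hnorm
          exact (mul_left_cancel₀ (ne_of_gt hMpos) h2).symm
        have hex : ∃ α, α ∈ P.roots := by
          refine Multiset.card_pos_iff_exists_mem.mp ?_
          rw [hcard]; exact hNpos
        obtain ⟨α, hα⟩ := hex
        have hmem : ‖α‖ ∈ P.roots.map (fun α => ‖α‖) := Multiset.mem_map_of_mem _ hα
        obtain ⟨s, hs⟩ := Multiset.exists_cons_of_mem hmem
        have hsle : ∀ x ∈ s, 0 ≤ x ∧ x ≤ 1 := by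
          intro x hx
          have hx' : x ∈ P.roots.map (fun α => ‖α‖) := by
            rw [hs]; exact Multiset.mem_cons_of_mem hx
          obtain ⟨β, hβ, rfl⟩ := Multiset.mem_map.mp hx'
          exact ⟨norm_nonneg β, hroots_le β hβ⟩
        have hsprod := multiset_prod_le_one hsle
        have hα1 : ‖α‖ = 1 := by
          have h1 : ‖α‖ * s.prod = 1 := by
            rw [← Multiset.prod_cons, ← hs, hprod]
          have hge : 1 ≤ ‖α‖ := by nlinarith [norm_nonneg α, hsprod.1, hsprod.2]
          exact le_antisymm (hroots_le α hα) hge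
        refine ⟨α, hα1, ?_⟩
        have hαroot : P.eval α = 0 := (Polynomial.mem_roots hPne).mp hα
        have hsd : ∑ i ∈ Finset.range (N+1), b i * α ^ i = d := by
          have := hevalP α
          rw [hαroot] at this
          exact sub_eq_zero.mp this.symm
        rw [hsd, hd.1]
    obtain ⟨w, hw1, hwM⟩ := key
    refine ⟨c * w, by rw [norm_mul, hw1, mul_one, hr], ?_⟩
    have hzsum : (fun n => a n * (c * w) ^ n) = fun n => b n * w ^ n := by
      funext n; rw [hbdef]; ring
    rw [hzsum, hMsup, ← Summable.sum_add_tsum_nat_add (N+1) (hsum w hw1.le)]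
    rw [norm_add_eq_left' (lt_of_le_of_lt (htail w hw1.le) (lt_of_lt_of_le hM'M hwM.ge))]
    exact hwM
end

section
/- Let k be an algebraically closed field complete with respect to a nontrivial non-Archimedean absolute value, r ∈ |k*|, and f = Σ_{n≥0} aₙ zⁿ a nonzero power series with |aₙ| rⁿ → 0. If there exist integers n₁ ≠ n₂ with |a_{n₁}| t^{n₁} = |a_{n₂}| t^{n₂} = sup_n |aₙ| tⁿ for some t ∈ (0, r] ∩ |k*|, then f has a zero z₀ ∈ k with |z₀| = t. -/
set_option linter.unusedSectionVars false
set_option linter.unnecessarySimpa false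
set_option maxHeartbeats 1000000

open Filter Polynomial IsUltrametricDist

section NewtonPolygon

variable {k : Type*} [NontriviallyNormedField k] [IsUltrametricDist k]

/-- Coefficient norms are bounded by `S`, attained at `N`, strictly smaller above `N`. -/
def TopDom (P : Polynomial k) (S : ℝ) (N : ℕ) : Prop :=
  0 < S ∧ ‖P.coeff N‖ = S ∧ (∀ n, ‖P.coeff n‖ ≤ S) ∧ ∀ n, N < n → ‖P.coeff n‖ < S

/-- Coefficient norms are bounded by `S`, attained at `N`, strictly smaller below `N`. -/
def BotDom (P : Polynomial k) (S : ℝ) (N : ℕ) : Prop :=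
  0 < S ∧ ‖P.coeff N‖ = S ∧ (∀ n, ‖P.coeff n‖ ≤ S) ∧ ∀ n, n < N → ‖P.coeff n‖ < S

lemma norm_sum_eq_of_dominant {ι : Type*} {s : Finset ι} {f : ι → k} {i : ι} (hi : i ∈ s)
    (h : ∀ j ∈ s, j ≠ i → ‖f j‖ < ‖f i‖) : ‖∑ j ∈ s, f j‖ = ‖f i‖ := by
  classical
  rw [← Finset.add_sum_erase _ _ hi]
  rcases (s.erase i).eq_empty_or_nonempty with he | he
  · simp [he]
  · have hlt : ‖∑ j ∈ s.erase i, f j‖ < ‖f i‖ := by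
      obtain ⟨j, hj, hle⟩ := exists_norm_finset_sum_le_of_nonempty he f
      exact lt_of_le_of_lt hle (h j (Finset.mem_of_mem_erase hj) (Finset.ne_of_mem_erase hj))
    rw [norm_add_eq_max_of_norm_ne_norm (ne_of_lt hlt).symm]
    exact max_eq_left hlt.le

lemma norm_sum_lt_of_forall_lt {ι : Type*} {s : Finset ι} (hs : s.Nonempty) {f : ι → k} {C : ℝ}
    (h : ∀ j ∈ s, ‖f j‖ < C) : ‖∑ j ∈ s, f j‖ < C := by
  obtain ⟨j, hj, hle⟩ := exists_norm_finset_sum_le_of_nonempty hs f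
  exact lt_of_le_of_lt hle (h j hj)

lemma TopDom.mul {P Q : Polynomial k} {S T : ℝ} {N M : ℕ}
    (hP : TopDom P S N) (hQ : TopDom Q T M) : TopDom (P * Q) (S * T) (N + M) := by
  obtain ⟨hS, hPN, hPle, hPlt⟩ := hP
  obtain ⟨hT, hQM, hQle, hQlt⟩ := hQ
  have hST : 0 < S * T := mul_pos hS hT
  have hterm : ∀ (i j : ℕ), (N < i ∨ M < j) → ‖P.coeff i * Q.coeff j‖ < S * T := by
    intro i j hij
    rw [norm_mul]
    rcases hij with hij | hij
    · calc ‖P.coeff i‖ * ‖Q.coeff j‖ ≤ ‖P.coeff i‖ * T :=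
            mul_le_mul_of_nonneg_left (hQle j) (norm_nonneg _)
      _ < S * T := (mul_lt_mul_iff_left₀ hT).mpr (hPlt i hij)
    · calc ‖P.coeff i‖ * ‖Q.coeff j‖ ≤ S * ‖Q.coeff j‖ :=
            mul_le_mul_of_nonneg_right (hPle i) (norm_nonneg _)
      _ < S * T := (mul_lt_mul_iff_right₀ hS).mpr (hQlt j hij)
  have hkey : ‖(P * Q).coeff (N + M)‖ = S * T := by
    rw [Polynomial.coeff_mul]
    have := norm_sum_eq_of_dominant (s := Finset.HasAntidiagonal.antidiagonal (N + M))
      (f := fun x => P.coeff x.1 * Q.coeff x.2) (i := (N, M))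
      (by simp [Finset.HasAntidiagonal.mem_antidiagonal]) ?_
    · rw [this, norm_mul, hPN, hQM]
    · rintro ⟨i, j⟩ hij hne
      simp only [Finset.HasAntidiagonal.mem_antidiagonal] at hij
      rcases lt_or_ge N i with hNi | hNi
      · refine lt_of_lt_of_le (hterm i j (Or.inl hNi)) ?_
        rw [norm_mul, hPN, hQM]
      · rcases lt_or_eq_of_le hNi with hNi | hNi
        · have : M < j := by omega
          refine lt_of_lt_of_le (hterm i j (Or.inr this)) ?_
          rw [norm_mul, hPN, hQM]
        · exfalso; apply hne; ext <;> omega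
  refine ⟨hST, hkey, ?_, ?_⟩
  · intro n
    rw [Polynomial.coeff_mul]
    refine norm_sum_le_of_forall_le_of_nonneg hST.le ?_
    rintro ⟨i, j⟩ _
    rw [norm_mul]
    exact mul_le_mul (hPle i) (hQle j) (norm_nonneg _) hS.le
  · intro n hn
    rw [Polynomial.coeff_mul]
    refine norm_sum_lt_of_forall_lt ⟨(n, 0), by simp⟩ ?_
    rintro ⟨i, j⟩ hij
    simp only [Finset.HasAntidiagonal.mem_antidiagonal] at hij
    exact hterm i j (by omega)

lemma BotDom.mul {P Q : Polynomial k} {S T : ℝ} {N M : ℕ}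
    (hP : BotDom P S N) (hQ : BotDom Q T M) : BotDom (P * Q) (S * T) (N + M) := by
  obtain ⟨hS, hPN, hPle, hPlt⟩ := hP
  obtain ⟨hT, hQM, hQle, hQlt⟩ := hQ
  have hST : 0 < S * T := mul_pos hS hT
  have hterm : ∀ (i j : ℕ), (i < N ∨ j < M) → ‖P.coeff i * Q.coeff j‖ < S * T := by
    intro i j hij
    rw [norm_mul]
    rcases hij with hij | hij
    · calc ‖P.coeff i‖ * ‖Q.coeff j‖ ≤ ‖P.coeff i‖ * T :=
            mul_le_mul_of_nonneg_left (hQle j) (norm_nonneg _)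
      _ < S * T := (mul_lt_mul_iff_left₀ hT).mpr (hPlt i hij)
    · calc ‖P.coeff i‖ * ‖Q.coeff j‖ ≤ S * ‖Q.coeff j‖ :=
            mul_le_mul_of_nonneg_right (hPle i) (norm_nonneg _)
      _ < S * T := (mul_lt_mul_iff_right₀ hS).mpr (hQlt j hij)
  have hkey : ‖(P * Q).coeff (N + M)‖ = S * T := by
    rw [Polynomial.coeff_mul]
    have := norm_sum_eq_of_dominant (s := Finset.HasAntidiagonal.antidiagonal (N + M))
      (f := fun x => P.coeff x.1 * Q.coeff x.2) (i := (N, M))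
      (by simp [Finset.HasAntidiagonal.mem_antidiagonal]) ?_
    · rw [this, norm_mul, hPN, hQM]
    · rintro ⟨i, j⟩ hij hne
      simp only [Finset.HasAntidiagonal.mem_antidiagonal] at hij
      rcases lt_or_ge i N with hNi | hNi
      · refine lt_of_lt_of_le (hterm i j (Or.inl hNi)) ?_
        rw [norm_mul, hPN, hQM]
      · rcases lt_or_eq_of_le hNi with hNi | hNi
        · have : j < M := by omega
          refine lt_of_lt_of_le (hterm i j (Or.inr this)) ?_
          rw [norm_mul, hPN, hQM]
        · exfalso; apply hne; ext <;> omega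
  refine ⟨hST, hkey, ?_, ?_⟩
  · intro n
    rw [Polynomial.coeff_mul]
    refine norm_sum_le_of_forall_le_of_nonneg hST.le ?_
    rintro ⟨i, j⟩ _
    rw [norm_mul]
    exact mul_le_mul (hPle i) (hQle j) (norm_nonneg _) hS.le
  · intro n hn
    rw [Polynomial.coeff_mul]
    refine norm_sum_lt_of_forall_lt ⟨(n, 0), by simp⟩ ?_
    rintro ⟨i, j⟩ hij
    simp only [Finset.HasAntidiagonal.mem_antidiagonal] at hij
    exact hterm i j (by omega)

lemma coeff_X_sub_C' (ρ : k) (n : ℕ) :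
    (X - C ρ).coeff n = if n = 0 then -ρ else if n = 1 then 1 else 0 := by
  rcases n with _ | n
  · simp
  · rcases n with _ | n
    · simp
    · simp only [Polynomial.coeff_sub, Polynomial.coeff_X, Polynomial.coeff_C]
      norm_num

lemma topDom_linear (ρ : k) :
    TopDom (X - C ρ) (max 1 ‖ρ‖) (if ‖ρ‖ ≤ 1 then 1 else 0) := by
  have h1 : (0:ℝ) < max 1 ‖ρ‖ := lt_of_lt_of_le one_pos (le_max_left _ _)
  rcases le_or_gt ‖ρ‖ 1 with h | h
  · rw [if_pos h]
    refine ⟨h1, ?_, ?_, ?_⟩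
    · simp [coeff_X_sub_C', max_eq_left h]
    · intro n
      rw [coeff_X_sub_C']
      split_ifs <;> simp [le_max_left, le_max_right, h1.le]
    · intro n hn
      rw [coeff_X_sub_C']
      rw [if_neg (by omega), if_neg (by omega)]
      simpa using h1
  · rw [if_neg (not_le.mpr h)]
    refine ⟨h1, ?_, ?_, ?_⟩
    · simp [coeff_X_sub_C', max_eq_right h.le]
    · intro n
      rw [coeff_X_sub_C']
      split_ifs <;> simp [le_max_left, le_max_right, h1.le]
    · intro n hn
      rw [coeff_X_sub_C', if_neg (by omega)]
      split_ifs
      · simp [max_eq_right h.le, h]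
      · simpa using h1

lemma botDom_linear (ρ : k) :
    BotDom (X - C ρ) (max 1 ‖ρ‖) (if ‖ρ‖ < 1 then 1 else 0) := by
  have h1 : (0:ℝ) < max 1 ‖ρ‖ := lt_of_lt_of_le one_pos (le_max_left _ _)
  rcases lt_or_ge ‖ρ‖ 1 with h | h
  · rw [if_pos h]
    refine ⟨h1, ?_, ?_, ?_⟩
    · simp [coeff_X_sub_C', max_eq_left h.le]
    · intro n
      rw [coeff_X_sub_C']
      split_ifs <;> simp [le_max_left, le_max_right, h1.le]
    · intro n hn
      rw [coeff_X_sub_C', if_pos (by omega)]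
      simp [max_eq_left h.le, h]
  · rw [if_neg (not_lt.mpr h)]
    refine ⟨h1, ?_, ?_, ?_⟩
    · simp [coeff_X_sub_C', max_eq_right h]
    · intro n
      rw [coeff_X_sub_C']
      split_ifs <;> simp [le_max_left, le_max_right, h1.le]
    · intro n hn; omega

lemma topDom_one : TopDom (1 : Polynomial k) 1 0 := by
  refine ⟨one_pos, by simp, fun n => ?_, fun n hn => ?_⟩
  · rcases n with _ | n <;> simp [Polynomial.coeff_one]
  · rw [Polynomial.coeff_one, if_neg (by omega)]; simp

lemma botDom_one : BotDom (1 : Polynomial k) 1 0 := by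
  refine ⟨one_pos, by simp, fun n => ?_, fun n hn => ?_⟩
  · rcases n with _ | n <;> simp [Polynomial.coeff_one]
  · omega

lemma topDom_multiset_prod (s : Multiset k) :
    TopDom ((s.map fun ρ => X - C ρ).prod) ((s.map fun ρ => max 1 ‖ρ‖).prod)
      (Multiset.card (s.filter fun ρ => ‖ρ‖ ≤ 1)) := by
  classical
  induction s using Multiset.induction_on with
  | empty => simpa using topDom_one
  | cons a s ih =>
      simp only [Multiset.map_cons, Multiset.prod_cons, Multiset.filter_cons]
      have := (topDom_linear a).mul ih
      split_ifs with h
      · simpa [h, add_comm] using this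
      · simpa [h] using this

lemma botDom_multiset_prod (s : Multiset k) :
    BotDom ((s.map fun ρ => X - C ρ).prod) ((s.map fun ρ => max 1 ‖ρ‖).prod)
      (Multiset.card (s.filter fun ρ => ‖ρ‖ < 1)) := by
  classical
  induction s using Multiset.induction_on with
  | empty => simpa using botDom_one
  | cons a s ih =>
      simp only [Multiset.map_cons, Multiset.prod_cons, Multiset.filter_cons]
      have := (botDom_linear a).mul ih
      split_ifs with h
      · simpa [h, add_comm] using this
      · simpa [h] using this

lemma TopDom.unique {P : Polynomial k} {S S' : ℝ} {N N' : ℕ}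
    (h : TopDom P S N) (h' : TopDom P S' N') : S = S' ∧ N = N' := by
  obtain ⟨hS, hN, hle, hlt⟩ := h
  obtain ⟨hS', hN', hle', hlt'⟩ := h'
  have hSS : S = S' := le_antisymm (hN ▸ hle' N) (hN' ▸ hle N')
  refine ⟨hSS, ?_⟩
  by_contra hne
  rcases Nat.lt_or_ge N N' with hlt2 | hge
  · exact absurd hN' (ne_of_lt (hSS ▸ hlt N' hlt2))
  · have : N' < N := by omega
    exact absurd hN (ne_of_lt (hSS ▸ hlt' N this))

lemma BotDom.unique {P : Polynomial k} {S S' : ℝ} {N N' : ℕ}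
    (h : BotDom P S N) (h' : BotDom P S' N') : S = S' ∧ N = N' := by
  obtain ⟨hS, hN, hle, hlt⟩ := h
  obtain ⟨hS', hN', hle', hlt'⟩ := h'
  have hSS : S = S' := le_antisymm (hN ▸ hle' N) (hN' ▸ hle N')
  refine ⟨hSS, ?_⟩
  by_contra hne
  rcases Nat.lt_or_ge N N' with hlt2 | hge
  · exact absurd hN (ne_of_lt (hSS ▸ hlt' N hlt2))
  · have : N' < N := by omega
    exact absurd hN' (ne_of_lt (hSS ▸ hlt N' this))

variable [IsAlgClosed k]

lemma topDom_C (c : k) (hc : c ≠ 0) : TopDom (C c) ‖c‖ 0 := by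
  refine ⟨norm_pos_iff.mpr hc, by simp, fun n => ?_, fun n hn => ?_⟩
  · rw [Polynomial.coeff_C]; split_ifs <;> simp
  · rw [Polynomial.coeff_C, if_neg (by omega)]
    simpa using norm_pos_iff.mpr hc

lemma botDom_C (c : k) (hc : c ≠ 0) : BotDom (C c) ‖c‖ 0 := by
  refine ⟨norm_pos_iff.mpr hc, by simp, fun n => ?_, fun n hn => ?_⟩
  · rw [Polynomial.coeff_C]; split_ifs <;> simp
  · omega

/-- Core counting lemma. -/
lemma roots_count {P : Polynomial k} {S : ℝ} {m N : ℕ}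
    (htop : TopDom P S N) (hbot : BotDom P S m) :
    Multiset.card (P.roots.filter fun ρ => ‖ρ‖ ≤ 1) = N ∧
    Multiset.card (P.roots.filter fun ρ => ‖ρ‖ < 1) = m ∧
    ‖P.leadingCoeff‖ * ((P.roots.map fun ρ => max 1 ‖ρ‖).prod) = S := by
  classical
  have hP0 : P ≠ 0 := by
    intro h
    have h2 := htop.2.1
    rw [h, Polynomial.coeff_zero, norm_zero] at h2
    exact absurd h2.symm (ne_of_gt htop.1)
  have hlc : P.leadingCoeff ≠ 0 := leadingCoeff_ne_zero.mpr hP0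
  set c := P.leadingCoeff with hc'
  set R := P.roots with hR'
  have heq : P = C c * (R.map fun a => X - C a).prod :=
    Splits.eq_prod_roots (IsAlgClosed.splits P)
  have htop2 : TopDom P (‖c‖ * ((R.map fun ρ => max 1 ‖ρ‖).prod))
      (0 + Multiset.card (R.filter fun ρ => ‖ρ‖ ≤ 1)) := by
    rw [heq]
    exact (topDom_C _ hlc).mul (topDom_multiset_prod _)
  have hbot2 : BotDom P (‖c‖ * ((R.map fun ρ => max 1 ‖ρ‖).prod))
      (0 + Multiset.card (R.filter fun ρ => ‖ρ‖ < 1)) := by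
    rw [heq]
    exact (botDom_C _ hlc).mul (botDom_multiset_prod _)
  obtain ⟨hS1, hN1⟩ := htop.unique htop2
  obtain ⟨hS2, hm1⟩ := hbot.unique hbot2
  exact ⟨by omega, by omega, hS1.symm⟩

lemma exists_root_norm_one {P : Polynomial k} {S : ℝ} {m N : ℕ}
    (htop : TopDom P S N) (hbot : BotDom P S m) (hmN : m < N) :
    ∃ ρ, P.IsRoot ρ ∧ ‖ρ‖ = 1 := by
  classical
  obtain ⟨hN, hm, -⟩ := roots_count htop hbot
  by_contra hcon
  push_neg at hcon
  have : (P.roots.filter fun ρ => ‖ρ‖ ≤ 1) = (P.roots.filter fun ρ => ‖ρ‖ < 1) := by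
    apply Multiset.filter_congr
    intro ρ hρ
    have hne : ‖ρ‖ ≠ 1 := by
      intro h
      have hP0 : P ≠ 0 := by
        rintro rfl; simp at hρ
      exact hcon ρ (isRoot_of_mem_roots hρ) h
    constructor <;> intro h
    · exact lt_of_le_of_ne h hne
    · exact h.le
  rw [this, hm] at hN
  omega

variable [IsAlgClosed k]

lemma norm_multiset_prod' (s : Multiset k) : ‖s.prod‖ = (s.map fun x => ‖x‖).prod := by
  induction s using Multiset.induction_on with
  | empty => simp
  | cons a s ih => simp [norm_mul, ih]

lemma pow_card_le_prod_map (s : Multiset k) (f : k → ℝ) (δ : ℝ) (hδ : 0 ≤ δ)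
    (h : ∀ ρ ∈ s, δ ≤ f ρ) : δ ^ Multiset.card s ≤ (s.map f).prod := by
  induction s using Multiset.induction_on with
  | empty => simp
  | cons a s ih =>
      simp only [Multiset.map_cons, Multiset.prod_cons, Multiset.card_cons, pow_succ]
      have h1 : δ ^ Multiset.card s ≤ (s.map f).prod :=
        ih (fun ρ hρ => h ρ (Multiset.mem_cons_of_mem hρ))
      have h2 : δ ≤ f a := h a (Multiset.mem_cons_self _ _)
      calc δ ^ Multiset.card s * δ ≤ (s.map f).prod * f a :=
            mul_le_mul h1 h2 hδ (le_trans (pow_nonneg hδ _) h1)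
      _ = f a * (s.map f).prod := mul_comm _ _

/-- A point of the closed unit ball where `P` is small is close to a root. -/
lemma approx_root {P : Polynomial k} {S : ℝ} {m N : ℕ}
    (htop : TopDom P S N) (hbot : BotDom P S m) (hmN : m < N)
    {z : k} (hz : ‖z‖ ≤ 1) {ε : ℝ} (hε : ‖P.eval z‖ ≤ ε) :
    ∃ ρ, P.IsRoot ρ ∧ ‖ρ‖ ≤ 1 ∧ ‖z - ρ‖ ^ N ≤ ε / S := by
  classical
  obtain ⟨hcard, -, hS⟩ := roots_count htop hbot
  have hSpos : 0 < S := htop.1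
  have hP0 : P ≠ 0 := by
    intro h
    have h2 := htop.2.1
    rw [h, Polynomial.coeff_zero, norm_zero] at h2
    exact absurd h2.symm (ne_of_gt hSpos)
  set c := P.leadingCoeff with hc'
  set R := P.roots with hR'
  have heq : P = C c * (R.map fun a => X - C a).prod :=
    Splits.eq_prod_roots (IsAlgClosed.splits P)
  set Rs := R.filter (fun ρ => ‖ρ‖ ≤ 1) with hRs
  set Rb := R.filter (fun ρ => ¬ ‖ρ‖ ≤ 1) with hRb
  have hsplit : Rs + Rb = R := Multiset.filter_add_not _ _
  -- Rs is nonempty since its card is N ≥ 1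
  have hRs0 : Rs ≠ 0 := by
    intro h
    rw [h] at hcard
    simp at hcard
    omega
  have hne : Rs.toFinset.Nonempty := by
    obtain ⟨ρ, hρ⟩ := Multiset.exists_mem_of_ne_zero hRs0
    exact ⟨ρ, Multiset.mem_toFinset.mpr hρ⟩
  obtain ⟨ρ₀, hρ₀mem, hρ₀min⟩ := Rs.toFinset.exists_min_image (fun ρ => ‖z - ρ‖) hne
  rw [Multiset.mem_toFinset] at hρ₀mem
  set δ := ‖z - ρ₀‖ with hδ'
  have hδ0 : 0 ≤ δ := norm_nonneg _
  have hρ₀le : ‖ρ₀‖ ≤ 1 := (Multiset.mem_filter.mp hρ₀mem).2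
  -- evaluate
  have heval : ‖P.eval z‖ = ‖c‖ * ((R.map fun ρ => ‖z - ρ‖).prod) := by
    conv_lhs => rw [heq]
    rw [Polynomial.eval_mul, Polynomial.eval_C, norm_mul, Polynomial.eval_multiset_prod,
      norm_multiset_prod']
    congr 2
    rw [Multiset.map_map, Multiset.map_map]
    apply Multiset.map_congr rfl
    intro ρ _
    simp
  -- lower bound the product
  have hRbval : ∀ ρ ∈ Rb, ‖z - ρ‖ = max 1 ‖ρ‖ := by
    intro ρ hρ
    have h1 : 1 < ‖ρ‖ := not_le.mp (Multiset.mem_filter.mp hρ).2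
    have hzρ : ‖z‖ ≠ ‖ρ‖ := ne_of_lt (lt_of_le_of_lt hz h1)
    have : ‖z - ρ‖ = max ‖z‖ ‖ρ‖ := by
      rw [sub_eq_add_neg, norm_add_eq_max_of_norm_ne_norm (by simpa using hzρ), norm_neg]
    rw [this, max_eq_right (le_of_lt (lt_of_le_of_lt hz h1)), max_eq_right h1.le]
  have hRsval : ∀ ρ ∈ Rs, δ ≤ ‖z - ρ‖ := by
    intro ρ hρ
    exact hρ₀min ρ (Multiset.mem_toFinset.mpr hρ)
  have hprod1 : δ ^ N * ((Rb.map fun ρ => max 1 ‖ρ‖).prod) ≤ (R.map fun ρ => ‖z - ρ‖).prod := by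
    rw [← hsplit, Multiset.map_add, Multiset.prod_add]
    have h1 : δ ^ N ≤ (Rs.map fun ρ => ‖z - ρ‖).prod := by
      rw [← hcard]
      exact pow_card_le_prod_map _ _ _ hδ0 hRsval
    have h2 : (Rb.map fun ρ => max 1 ‖ρ‖).prod = (Rb.map fun ρ => ‖z - ρ‖).prod := by
      apply congrArg
      exact (Multiset.map_congr rfl (fun ρ hρ => (hRbval ρ hρ).symm))
    rw [h2]
    apply mul_le_mul_of_nonneg_right h1
    rw [← h2]
    apply Multiset.prod_nonneg
    intro x hx
    obtain ⟨ρ, -, rfl⟩ := Multiset.mem_map.mp hx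
    positivity
  have hSfact : S = ‖c‖ * ((Rb.map fun ρ => max 1 ‖ρ‖).prod) := by
    rw [← hS, ← hsplit, Multiset.map_add, Multiset.prod_add]
    have h1 : (Rs.map fun ρ => max 1 ‖ρ‖).prod = 1 := by
      rw [Multiset.prod_eq_one]
      intro x hx
      obtain ⟨ρ, hρ, rfl⟩ := Multiset.mem_map.mp hx
      exact max_eq_left (Multiset.mem_filter.mp hρ).2
    rw [h1, one_mul]
  have hlow : δ ^ N * S ≤ ‖P.eval z‖ := by
    rw [heval, hSfact]
    calc δ ^ N * (‖c‖ * ((Rb.map fun ρ => max 1 ‖ρ‖).prod))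
        = ‖c‖ * (δ ^ N * ((Rb.map fun ρ => max 1 ‖ρ‖).prod)) := by ring
      _ ≤ ‖c‖ * ((R.map fun ρ => ‖z - ρ‖).prod) :=
          mul_le_mul_of_nonneg_left hprod1 (norm_nonneg _)
  refine ⟨ρ₀, ?_, hρ₀le, ?_⟩
  · exact isRoot_of_mem_roots (Multiset.mem_of_le (Multiset.filter_le _ _) hρ₀mem)
  · rw [le_div_iff₀ hSpos]
    exact le_trans hlow hε
/-- Truncation of the power series with coefficients `b` at degree `M`. -/
noncomputable def trunc (b : ℕ → k) (M : ℕ) : Polynomial k :=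
  ∑ n ∈ Finset.range (M + 1), C (b n) * X ^ n

lemma trunc_coeff (b : ℕ → k) (M j : ℕ) :
    (trunc b M).coeff j = if j ≤ M then b j else 0 := by
  rw [trunc, Polynomial.finset_sum_coeff]
  simp only [Polynomial.coeff_C_mul, Polynomial.coeff_X_pow, mul_ite, mul_one, mul_zero]
  rw [Finset.sum_ite_eq (Finset.range (M + 1)) j]
  simp [Nat.lt_succ_iff]

lemma trunc_eval (b : ℕ → k) (M : ℕ) (z : k) :
    (trunc b M).eval z = ∑ n ∈ Finset.range (M + 1), b n * z ^ n := by
  rw [trunc, Polynomial.eval_finset_sum]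
  simp

lemma norm_pow_sub_pow_le' (z w : k) (hz : ‖z‖ ≤ 1) (hw : ‖w‖ ≤ 1) (n : ℕ) :
    ‖z ^ n - w ^ n‖ ≤ ‖z - w‖ := by
  induction n with
  | zero => simp
  | succ n ih =>
      have key : z ^ (n+1) - w ^ (n+1) = z * (z ^ n - w ^ n) + (z - w) * w ^ n := by ring
      rw [key]
      refine le_trans (norm_add_le_max _ _) (max_le ?_ ?_)
      · rw [norm_mul]
        calc ‖z‖ * ‖z ^ n - w ^ n‖ ≤ 1 * ‖z - w‖ :=
              mul_le_mul hz ih (norm_nonneg _) one_pos.le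
          _ = ‖z - w‖ := one_mul _
      · rw [norm_mul, norm_pow]
        calc ‖z - w‖ * ‖w‖ ^ n ≤ ‖z - w‖ * 1 ^ n :=
              mul_le_mul_of_nonneg_left (pow_le_pow_left₀ (norm_nonneg _) hw n) (norm_nonneg _)
          _ = ‖z - w‖ := by rw [one_pow, mul_one]

lemma trunc_eval_lipschitz (b : ℕ → k) {S : ℝ} (hb : ∀ n, ‖b n‖ ≤ S) (M : ℕ)
    {z w : k} (hz : ‖z‖ ≤ 1) (hw : ‖w‖ ≤ 1) :
    ‖(trunc b M).eval z - (trunc b M).eval w‖ ≤ S * ‖z - w‖ := by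
  have hS0 : 0 ≤ S := le_trans (norm_nonneg _) (hb 0)
  rw [trunc_eval, trunc_eval, ← Finset.sum_sub_distrib]
  refine norm_sum_le_of_forall_le_of_nonneg (by positivity) ?_
  intro n _
  have : b n * z ^ n - b n * w ^ n = b n * (z ^ n - w ^ n) := by ring
  rw [this, norm_mul]
  exact mul_le_mul (hb n) (norm_pow_sub_pow_le' z w hz hw n) (norm_nonneg _) hS0

lemma trunc_eval_sub (b : ℕ → k) (u v : ℕ) (huv : u ≤ v) {z : k} (hz : ‖z‖ ≤ 1)
    {C : ℝ} (hC : 0 ≤ C) (h : ∀ n, u < n → ‖b n‖ ≤ C) :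
    ‖(trunc b v).eval z - (trunc b u).eval z‖ ≤ C := by
  rw [trunc_eval, trunc_eval, ← Finset.sum_Ico_eq_sub _ (by omega)]
  refine norm_sum_le_of_forall_le_of_nonneg hC ?_
  intro n hn
  rw [Finset.mem_Ico] at hn
  rw [norm_mul, norm_pow]
  calc ‖b n‖ * ‖z‖ ^ n ≤ C * 1 ^ n :=
        mul_le_mul (h n (by omega)) (pow_le_pow_left₀ (norm_nonneg _) hz n) (by positivity) hC
    _ = C := by rw [one_pow, mul_one]

variable [IsAlgClosed k] [CompleteSpace k]

theorem main_b (b : ℕ → k) (hb0 : Tendsto (fun n => ‖b n‖) atTop (nhds 0))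
    (n₁ n₂ : ℕ) (hnn : n₁ ≠ n₂) (hex : ∃ n, b n ≠ 0)
    (h₁ : ‖b n₁‖ = ⨆ n, ‖b n‖) (h₂ : ‖b n₂‖ = ⨆ n, ‖b n‖) :
    ∃ z : k, ‖z‖ = 1 ∧ ∑' n, b n * z ^ n = 0 := by
  classical
  set S := ⨆ n, ‖b n‖ with hS'
  have hbdd : BddAbove (Set.range fun n => ‖b n‖) := hb0.bddAbove_range
  have hleS : ∀ n, ‖b n‖ ≤ S := fun n => le_ciSup hbdd n
  obtain ⟨n0, hn0⟩ := hex
  have hSpos : 0 < S := lt_of_lt_of_le (norm_pos_iff.mpr hn0) (hleS n0)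
  obtain ⟨K, hK⟩ := eventually_atTop.mp (hb0.eventually_lt_const hSpos)
  -- the largest index attaining the sup
  set F := (Finset.range K).filter (fun n => ‖b n‖ = S) with hF'
  have hmemF : ∀ n, ‖b n‖ = S → n ∈ F := by
    intro n hn
    refine Finset.mem_filter.mpr ⟨Finset.mem_range.mpr ?_, hn⟩
    by_contra h
    exact absurd hn (ne_of_lt (hK n (by omega)))
  have hFne : F.Nonempty := ⟨n₁, hmemF n₁ h₁⟩
  set N := F.max' hFne with hN'
  have hN_att : ‖b N‖ = S := (Finset.mem_filter.mp (F.max'_mem hFne)).2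
  have hmem_le : ∀ n, ‖b n‖ = S → n ≤ N := fun n hn => F.le_max' n (hmemF n hn)
  have hN_top : ∀ n, N < n → ‖b n‖ < S := by
    intro n hn
    rcases eq_or_ne ‖b n‖ S with h | h
    · exact absurd (hmem_le n h) (by omega)
    · exact lt_of_le_of_ne (hleS n) h
  -- the smallest index attaining the sup
  have hexS : ∃ n, ‖b n‖ = S := ⟨n₁, h₁⟩
  set m := Nat.find hexS with hm'
  have hm_att : ‖b m‖ = S := Nat.find_spec hexS
  have hm_bot : ∀ n, n < m → ‖b n‖ < S :=
    fun n hn => lt_of_le_of_ne (hleS n) (Nat.find_min hexS hn)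
  have hmN : m < N := by
    have h1 : m ≤ n₁ := Nat.find_min' hexS h₁
    have h2 : m ≤ n₂ := Nat.find_min' hexS h₂
    have h3 : n₁ ≤ N := hmem_le n₁ h₁
    have h4 : n₂ ≤ N := hmem_le n₂ h₂
    omega
  -- truncation polynomials are dominated
  have htop : ∀ M, N ≤ M → TopDom (trunc b M) S N := by
    intro M hM
    refine ⟨hSpos, ?_, ?_, ?_⟩
    · rw [trunc_coeff, if_pos (by omega)]; exact hN_att
    · intro n
      rw [trunc_coeff]
      split_ifs
      · exact hleS n
      · simpa using hSpos.le
    · intro n hn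
      rw [trunc_coeff]
      split_ifs
      · exact hN_top n hn
      · simpa using hSpos
  have hbot : ∀ M, N ≤ M → BotDom (trunc b M) S m := by
    intro M hM
    refine ⟨hSpos, ?_, ?_, ?_⟩
    · rw [trunc_coeff, if_pos (by omega)]; exact hm_att
    · intro n
      rw [trunc_coeff]
      split_ifs
      · exact hleS n
      · simpa using hSpos.le
    · intro n hn
      rw [trunc_coeff, if_pos (by omega)]
      exact hm_bot n hn
  -- tolerances and cut-offs
  set tol : ℕ → ℝ := fun j => S * ((2:ℝ)⁻¹ ^ (j + 1)) ^ N with htol'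
  have htolpos : ∀ j, 0 < tol j := fun j => by positivity
  have htolmono : ∀ j, tol (j + 1) ≤ tol j := by
    intro j
    refine mul_le_mul_of_nonneg_left ?_ hSpos.le
    refine pow_le_pow_left₀ (by positivity) ?_ N
    refine pow_le_pow_of_le_one (by norm_num) (by norm_num) (by omega)
  have hMex : ∀ j, ∃ M, N ≤ M ∧ ∀ n, M < n → ‖b n‖ ≤ tol j := by
    intro j
    obtain ⟨K', hK'⟩ := eventually_atTop.mp (hb0.eventually_lt_const (htolpos j))
    exact ⟨max N K', le_max_left _ _, fun n hn => (hK' n (by omega)).le⟩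
  choose M hMN hMtail using hMex
  -- one refinement step
  have hstep : ∀ j (z : k), ‖z‖ = 1 → (trunc b (M j)).eval z = 0 →
      ∃ w : k, ‖w‖ = 1 ∧ (trunc b (M (j+1))).eval w = 0 ∧ ‖z - w‖ ≤ (2:ℝ)⁻¹ ^ (j + 1) := by
    intro j z hz1 hz0
    have hbnd : ‖(trunc b (M (j+1))).eval z‖ ≤ tol j := by
      rcases le_total (M j) (M (j+1)) with h | h
      · have := trunc_eval_sub b (M j) (M (j+1)) h hz1.le (htolpos j).le (hMtail j)
        rwa [hz0, sub_zero] at this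
      · have := trunc_eval_sub b (M (j+1)) (M j) h hz1.le (htolpos (j+1)).le (hMtail (j+1))
        rw [hz0, zero_sub, norm_neg] at this
        exact le_trans this (htolmono j)
    obtain ⟨ρ, hroot, hρle, hρpow⟩ :=
      approx_root (htop _ (hMN _)) (hbot _ (hMN _)) hmN hz1.le hbnd
    have hdiv : tol j / S = ((2:ℝ)⁻¹ ^ (j + 1)) ^ N := by
      show S * ((2:ℝ)⁻¹ ^ (j + 1)) ^ N / S = _
      rw [mul_comm, mul_div_assoc, div_self (ne_of_gt hSpos), mul_one]
    rw [hdiv] at hρpow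
    have hdist : ‖z - ρ‖ ≤ (2:ℝ)⁻¹ ^ (j + 1) :=
      (pow_le_pow_iff_left₀ (norm_nonneg _) (by positivity) (by omega)).mp hρpow
    have hlt1 : ‖z - ρ‖ < 1 := by
      refine lt_of_le_of_lt hdist ?_
      calc ((2:ℝ)⁻¹) ^ (j+1) ≤ (2:ℝ)⁻¹ ^ 1 :=
            pow_le_pow_of_le_one (by norm_num) (by norm_num) (by omega)
        _ < 1 := by norm_num
    have hρ1 : ‖ρ‖ = 1 := by
      have hne : ‖z‖ ≠ ‖-(z - ρ)‖ := by
        rw [norm_neg, hz1]; exact (ne_of_lt hlt1).symm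
      have : ρ = z + (-(z - ρ)) := by ring
      rw [this, norm_add_eq_max_of_norm_ne_norm hne, norm_neg, hz1]
      exact max_eq_left (hz1 ▸ hlt1.le)
    exact ⟨ρ, hρ1, hroot, hdist⟩
  -- initial point
  obtain ⟨z0, hz0root, hz01⟩ :=
    exists_root_norm_one (htop _ (hMN 0)) (hbot _ (hMN 0)) hmN
  -- the sequence of roots
  let zs : ∀ j : ℕ, {z : k // ‖z‖ = 1 ∧ (trunc b (M j)).eval z = 0} := fun j =>
    Nat.rec (motive := fun j => {z : k // ‖z‖ = 1 ∧ (trunc b (M j)).eval z = 0})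
      ⟨z0, hz01, hz0root⟩
      (fun j ih =>
        ⟨(hstep j ih.1 ih.2.1 ih.2.2).choose,
         (hstep j ih.1 ih.2.1 ih.2.2).choose_spec.1,
         (hstep j ih.1 ih.2.1 ih.2.2).choose_spec.2.1⟩) j
  have hzf1 : ∀ j, ‖(zs j).1‖ = 1 := fun j => (zs j).2.1
  have hzf0 : ∀ j, (trunc b (M j)).eval (zs j).1 = 0 := fun j => (zs j).2.2
  have hdist : ∀ j, ‖(zs j).1 - (zs (j+1)).1‖ ≤ (2:ℝ)⁻¹ ^ (j + 1) := fun j =>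
    (hstep j (zs j).1 (zs j).2.1 (zs j).2.2).choose_spec.2.2
  set zf : ℕ → k := fun j => (zs j).1 with hzf'
  have hcauchy : CauchySeq zf := by
    apply cauchySeq_of_le_geometric (2:ℝ)⁻¹ 1 (by norm_num)
    intro n
    rw [dist_eq_norm]
    calc ‖zf n - zf (n+1)‖ ≤ (2:ℝ)⁻¹ ^ (n+1) := hdist n
      _ = (2:ℝ)⁻¹ * (2:ℝ)⁻¹ ^ n := by rw [pow_succ, mul_comm]
      _ ≤ 1 * (2:ℝ)⁻¹ ^ n := by
          refine mul_le_mul_of_nonneg_right (by norm_num) (by positivity)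
  obtain ⟨w, hw⟩ := cauchySeq_tendsto_of_complete hcauchy
  have hsteps : ∀ j i, j ≤ i → ‖zf i - zf j‖ ≤ (2:ℝ)⁻¹ ^ (j + 1) := by
    intro j i hij
    induction i, hij using Nat.le_induction with
    | base =>
        simp only [sub_self, norm_zero]
        positivity
    | succ i hij ih =>
        have hre : zf (i+1) - zf j = -(zf i - zf (i+1)) + (zf i - zf j) := by ring
        rw [hre]
        refine le_trans (norm_add_le_max _ _) (max_le ?_ ih)
        rw [norm_neg]
        exact le_trans (hdist i)
          (pow_le_pow_of_le_one (by norm_num) (by norm_num) (by omega))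
  have hclose : ∀ j, ‖w - zf j‖ ≤ (2:ℝ)⁻¹ ^ (j + 1) := by
    intro j
    have hcont : Tendsto (fun i => ‖zf i - zf j‖) atTop (nhds ‖w - zf j‖) :=
      (hw.sub tendsto_const_nhds).norm
    exact le_of_tendsto hcont (eventually_atTop.mpr ⟨j, fun i hi => hsteps j i hi⟩)
  have hw1 : ‖w‖ = 1 := by
    have hlt : ‖w - zf 0‖ < 1 := lt_of_le_of_lt (hclose 0) (by norm_num)
    have hne : ‖zf 0‖ ≠ ‖w - zf 0‖ := by rw [hzf1 0]; exact (ne_of_lt hlt).symm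
    have hre : w = zf 0 + (w - zf 0) := by ring
    rw [hre, norm_add_eq_max_of_norm_ne_norm hne, hzf1 0]
    exact max_eq_left (le_of_lt (lt_of_lt_of_le hlt (le_refl 1)))
  have hsum : Summable (fun n => b n * w ^ n) := by
    apply NonarchimedeanAddGroup.summable_of_tendsto_cofinite_zero
    rw [Nat.cofinite_eq_atTop]
    apply squeeze_zero_norm (fun n => ?_) hb0
    rw [norm_mul, norm_pow, hw1, one_pow, mul_one]
  have hbound : ∀ j, ‖∑' n, b n * w ^ n‖ ≤ max (tol j) (S * (2:ℝ)⁻¹ ^ (j+1)) := by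
    intro j
    have h1 : ‖(∑' n, b n * w ^ n) - (trunc b (M j)).eval w‖ ≤ tol j := by
      rw [trunc_eval]
      have hts := Summable.sum_add_tsum_nat_add (f := fun n => b n * w ^ n) (M j + 1) hsum
      have heqt : (∑' n, b n * w ^ n) - ∑ n ∈ Finset.range (M j + 1), b n * w ^ n
          = ∑' n : ℕ, b (n + (M j + 1)) * w ^ (n + (M j + 1)) := by
        rw [← hts]; ring
      rw [heqt]
      refine norm_tsum_le_of_forall_le_of_nonneg (htolpos j).le ?_
      intro i
      rw [norm_mul, norm_pow, hw1, one_pow, mul_one]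
      exact hMtail j _ (by omega)
    have h2 : ‖(trunc b (M j)).eval w - (trunc b (M j)).eval (zf j)‖
        ≤ S * (2:ℝ)⁻¹ ^ (j+1) := by
      refine le_trans (trunc_eval_lipschitz b hleS (M j) (le_of_eq hw1) (le_of_eq (hzf1 j))) ?_
      exact mul_le_mul_of_nonneg_left (hclose j) hSpos.le
    have hdecomp : (∑' n, b n * w ^ n)
        = ((∑' n, b n * w ^ n) - (trunc b (M j)).eval w)
          + ((trunc b (M j)).eval w - (trunc b (M j)).eval (zf j)) := by
      rw [hzf0 j]; ring
    calc ‖∑' n, b n * w ^ n‖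
        = ‖((∑' n, b n * w ^ n) - (trunc b (M j)).eval w)
          + ((trunc b (M j)).eval w - (trunc b (M j)).eval (zf j))‖ := by rw [← hdecomp]
      _ ≤ max _ _ := norm_add_le_max _ _
      _ ≤ max (tol j) (S * (2:ℝ)⁻¹ ^ (j+1)) := max_le_max h1 h2
  have hNne : N ≠ 0 := by omega
  have l0 : Tendsto (fun j : ℕ => (2:ℝ)⁻¹ ^ j) atTop (nhds 0) :=
    tendsto_pow_atTop_nhds_zero_of_lt_one (by norm_num) (by norm_num)
  have l0' : Tendsto (fun j : ℕ => (2:ℝ)⁻¹ ^ (j+1)) atTop (nhds 0) :=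
    l0.comp (tendsto_add_atTop_nat 1)
  have l1 : Tendsto tol atTop (nhds 0) := by
    have := (l0'.pow N).const_mul S
    rw [htol']
    simpa [zero_pow hNne] using this
  have l2 : Tendsto (fun j => S * (2:ℝ)⁻¹ ^ (j+1)) atTop (nhds 0) := by
    have := l0'.const_mul S
    simpa using this
  have htends : Tendsto (fun j => max (tol j) (S * (2:ℝ)⁻¹ ^ (j+1))) atTop (nhds 0) := by
    have := l1.max l2
    simpa using this
  have hfin : ‖∑' n, b n * w ^ n‖ ≤ 0 :=
    ge_of_tendsto htends (Eventually.of_forall hbound)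
  exact ⟨w, hw1, norm_le_zero_iff.mp hfin⟩


end NewtonPolygon

/-- Newton polygon corners force zeros: if the Gauss norm at radius `t ∈ (0,r] ∩ |k*|`
is attained at two distinct indices, then the (nonzero) power series has a zero of
absolute value exactly `t`. -/
theorem corner_gives_zero
    (k : Type*) [NontriviallyNormedField k] [IsAlgClosed k] [CompleteSpace k]
    [IsUltrametricDist k]
    (a : ℕ → k) (c : k) (hc : c ≠ 0) (r : ℝ) (hr : r = ‖c‖)
    (hdecay : Tendsto (fun n => ‖a n‖ * r ^ n) atTop (nhds 0))
    (hne : ∃ n, a n ≠ 0)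
    (t : ℝ) (d : k) (hd : d ≠ 0) (ht : t = ‖d‖) (htpos : 0 < t) (htr : t ≤ r)
    (n₁ n₂ : ℕ) (hnn : n₁ ≠ n₂)
    (h₁ : ‖a n₁‖ * t ^ n₁ = ⨆ n : ℕ, ‖a n‖ * t ^ n)
    (h₂ : ‖a n₂‖ * t ^ n₂ = ⨆ n : ℕ, ‖a n‖ * t ^ n) :
    ∃ z₀ : k, ‖z₀‖ = t ∧ ∑' n : ℕ, a n * z₀ ^ n = 0 := by
  set b : ℕ → k := fun n => a n * d ^ n with hb'
  have hbn : ∀ n, ‖b n‖ = ‖a n‖ * t ^ n := by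
    intro n
    rw [hb', norm_mul, norm_pow, ht]
  have hb0 : Tendsto (fun n => ‖b n‖) atTop (nhds 0) := by
    refine squeeze_zero (fun n => norm_nonneg _) (fun n => ?_) hdecay
    rw [hbn n]
    exact mul_le_mul_of_nonneg_left (pow_le_pow_left₀ htpos.le htr n) (norm_nonneg _)
  have hsup : (⨆ n, ‖b n‖) = ⨆ n, ‖a n‖ * t ^ n := iSup_congr hbn
  have h₁' : ‖b n₁‖ = ⨆ n, ‖b n‖ := by rw [hbn, hsup]; exact h₁
  have h₂' : ‖b n₂‖ = ⨆ n, ‖b n‖ := by rw [hbn, hsup]; exact h₂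
  have hex : ∃ n, b n ≠ 0 := by
    obtain ⟨n, hn⟩ := hne
    exact ⟨n, mul_ne_zero hn (pow_ne_zero _ hd)⟩
  obtain ⟨z, hz1, hz0⟩ := main_b b hb0 n₁ n₂ hnn hex h₁' h₂'
  refine ⟨d * z, ?_, ?_⟩
  · rw [norm_mul, hz1, mul_one, ← ht]
  · rw [← hz0]
    refine tsum_congr fun n => ?_
    rw [hb', mul_pow]
    ring
end

section
/- Let k be an algebraically closed complete non-Archimedean valued field, r ∈ |k*|, and let f be a power series convergent on the closed disc D(r) with only finitely many zeros there. Then f factors as f = P · u where P is a polynomial whose roots are exactly the zeros of f in D(r) (with multiplicity) and u is a power series convergent and nowhere vanishing on D(r) (Weierstrass factorization on a non-Archimedean disc). -/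
open Filter

namespace WeierstrassAux

variable {k : Type*} [NontriviallyNormedField k] [CompleteSpace k] [IsUltrametricDist k]

lemma exists_bound_lt {t : ℕ → ℝ} (ht : Tendsto t atTop (nhds 0)) {M : ℝ} (hM : 0 < M)
    (h : ∀ n, t n < M) : ∃ C, C < M ∧ ∀ n, t n ≤ C := by
  obtain ⟨J, hJ⟩ := Metric.tendsto_atTop.mp ht (M / 2) (by linarith)
  have hs : (Finset.range (J + 1)).Nonempty := ⟨0, by simp⟩
  refine ⟨max (M / 2) ((Finset.range (J + 1)).sup' hs t), ?_, ?_⟩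
  · exact max_lt (by linarith) ((Finset.sup'_lt_iff hs).mpr fun n _ => h n)
  · intro n
    rcases le_or_gt n J with hn | hn
    · exact le_max_of_le_right (Finset.le_sup' t (by simp; omega))
    · have h2 := hJ n hn.le
      rw [Real.dist_eq, sub_zero] at h2
      exact le_max_of_le_left ((le_abs_self _).trans (by linarith))

lemma exists_top {t : ℕ → ℝ} (ht : Tendsto t atTop (nhds 0)) {n₀ : ℕ} (h : 0 < t n₀) :
    ∃ N, 0 < t N ∧ (∀ m, t m ≤ t N) ∧ ∀ m, N < m → t m < t N := by
  obtain ⟨J, hJ⟩ := Metric.tendsto_atTop.mp ht (t n₀) h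
  have hJ' : ∀ n, J ≤ n → t n < t n₀ := by
    intro n hn
    have h2 := hJ n hn
    rw [Real.dist_eq, sub_zero] at h2
    exact (le_abs_self _).trans_lt h2
  have hmemJ : ∀ m, t n₀ ≤ t m → m < J + 1 := by
    intro m hm
    by_contra hc
    exact absurd (hJ' m (by omega)) (not_lt.mpr hm)
  set s : Finset ℕ := (Finset.range (J + 1)).filter (fun n => t n₀ ≤ t n) with hs_def
  have hn₀s : n₀ ∈ s := by
    simp only [hs_def, Finset.mem_filter, Finset.mem_range]
    exact ⟨hmemJ n₀ le_rfl, le_rfl⟩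
  have hsne : s.Nonempty := ⟨n₀, hn₀s⟩
  have hMax : ∀ m, t m ≤ s.sup' hsne t := by
    intro m
    by_cases hm : t n₀ ≤ t m
    · refine Finset.le_sup' t ?_
      simp only [hs_def, Finset.mem_filter, Finset.mem_range]
      exact ⟨hmemJ m hm, hm⟩
    · exact (not_le.mp hm).le.trans (Finset.le_sup' t hn₀s)
  obtain ⟨i, his, hi⟩ := Finset.exists_mem_eq_sup' hsne t
  set s' : Finset ℕ := s.filter (fun n => s.sup' hsne t ≤ t n) with hs'_def
  have hs'ne : s'.Nonempty := ⟨i, Finset.mem_filter.mpr ⟨his, hi.le⟩⟩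
  have hN := (Finset.mem_filter.mp (s'.max'_mem hs'ne)).2
  refine ⟨s'.max' hs'ne, ?_, ?_, ?_⟩
  · exact h.trans_le ((Finset.le_sup' t hn₀s).trans hN)
  · intro m
    exact (hMax m).trans hN
  · intro m hm
    rcases lt_or_ge (t m) (t (s'.max' hs'ne)) with h' | h'
    · exact h'
    exfalso
    have htm : t n₀ ≤ t m := (Finset.le_sup' t hn₀s).trans (hN.trans h')
    have hmem : m ∈ s' := by
      refine Finset.mem_filter.mpr ⟨?_, hN.trans h'⟩
      simp only [hs_def, Finset.mem_filter, Finset.mem_range]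
      exact ⟨hmemJ m htm, htm⟩
    have := Finset.le_max' _ m hmem
    omega

lemma summable_aux {f : ℕ → k} {t : ℕ → ℝ} (ht : Tendsto t atTop (nhds 0))
    (hb : ∀ n, ‖f n‖ ≤ t n) : Summable f := by
  apply NonarchimedeanAddGroup.summable_of_tendsto_cofinite_zero
  rw [Nat.cofinite_eq_atTop]
  exact squeeze_zero_norm hb ht

lemma summable_series {r : ℝ} {c : ℕ → k} (h : Tendsto (fun n => ‖c n‖ * r ^ n) atTop (nhds 0))
    {z : k} (hz : ‖z‖ ≤ r) : Summable (fun n => c n * z ^ n) :=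
  summable_aux h (fun n => by
    rw [norm_mul, norm_pow]
    exact mul_le_mul_of_nonneg_left (pow_le_pow_left₀ (norm_nonneg z) hz n) (norm_nonneg _))

lemma norm_tsum_eq_head {f : ℕ → k} (hsum : Summable f) {C : ℝ} (hC : C < ‖f 0‖)
    (h : ∀ m, ‖f (m + 1)‖ ≤ C) : ‖∑' n, f n‖ = ‖f 0‖ := by
  have hC0 : 0 ≤ C := (norm_nonneg _).trans (h 0)
  rw [Summable.tsum_eq_zero_add hsum]
  have hT : ‖∑' m, f (m + 1)‖ ≤ C :=
    IsUltrametricDist.norm_tsum_le_of_forall_le_of_nonneg hC0 h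
  have hne : ‖f 0‖ ≠ ‖∑' m, f (m + 1)‖ := (hT.trans_lt hC).ne'
  rw [IsUltrametricDist.norm_add_eq_max_of_norm_ne_norm hne,
    max_eq_left (hT.trans hC.le)]

lemma tail_decay {t : ℕ → ℝ} (h : Tendsto t atTop (nhds 0)) (j : ℕ) :
    Tendsto (fun m => t (j + m)) atTop (nhds 0) := by
  have h2 := h.comp (tendsto_add_atTop_nat j)
  have he : (fun m => t (j + m)) = (fun m => t (m + j)) := by
    funext m; rw [add_comm]
  rw [he]; exact h2

lemma shift_div {r : ℝ} (hr : 0 < r) {u : ℕ → ℝ} (j : ℕ)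
    (h : Tendsto (fun n => u n * r ^ n) atTop (nhds 0)) :
    Tendsto (fun m => u (j + m) * r ^ m) atTop (nhds 0) := by
  have h1 := (tail_decay h j).div_const (r ^ j)
  rw [zero_div] at h1
  refine h1.congr fun m => ?_
  rw [pow_add, mul_comm (r ^ j) (r ^ m), ← mul_assoc, mul_div_assoc,
    div_self (pow_ne_zero j hr.ne'), mul_one]

lemma main {r : ℝ} (hr : 0 < r) :
    ∀ N : ℕ, ∀ a : ℕ → k,
    Tendsto (fun n => ‖a n‖ * r ^ n) atTop (nhds 0) →
    0 < ‖a N‖ * r ^ N →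
    (∀ m, ‖a m‖ * r ^ m ≤ ‖a N‖ * r ^ N) →
    (∀ m, N < m → ‖a m‖ * r ^ m < ‖a N‖ * r ^ N) →
    ∃ (P : Polynomial k) (b : ℕ → k),
      Tendsto (fun n => ‖b n‖ * r ^ n) atTop (nhds 0) ∧
      (∀ z : k, ‖z‖ ≤ r → ∑' n : ℕ, b n * z ^ n ≠ 0) ∧
      (∀ z : k, ‖z‖ ≤ r →
        ∑' n : ℕ, a n * z ^ n = P.eval z * ∑' n : ℕ, b n * z ^ n) ∧
      (∀ z : k, P.IsRoot z ↔ (‖z‖ ≤ r ∧ ∑' n : ℕ, a n * z ^ n = 0)) := by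
  intro N
  induction N using Nat.strong_induction_on with
  | _ N IH =>
  intro a hdecay hpos hmax hstrict
  by_cases hz : ∃ z₀ : k, ‖z₀‖ ≤ r ∧ ∑' n : ℕ, a n * z₀ ^ n = 0
  case neg =>
    push_neg at hz
    refine ⟨1, a, hdecay, fun z hzr => hz z hzr, fun z hzr => by simp, fun z => ?_⟩
    simp only [Polynomial.IsRoot, Polynomial.eval_one]
    constructor
    · intro h; exact absurd h one_ne_zero
    · rintro ⟨hzr, h0⟩; exact absurd h0 (hz z hzr)
  obtain ⟨z₀, hz₀r, hz₀⟩ := hz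
  rcases Nat.eq_zero_or_pos N with rfl | hN
  · exfalso
    have hpos0 : 0 < ‖a 0‖ := by simpa using hpos
    have h0 : ∀ m, ‖a (m + 1)‖ * r ^ (m + 1) < ‖a 0‖ := by
      intro m; simpa using hstrict (m + 1) (by omega)
    obtain ⟨C, hC, hCb⟩ := exists_bound_lt
      (t := fun m => ‖a (m + 1)‖ * r ^ (m + 1))
      ((tail_decay hdecay 1).congr fun m => by rw [add_comm]) hpos0 h0
    have hhead : ‖∑' n : ℕ, a n * z₀ ^ n‖ = ‖a 0 * z₀ ^ 0‖ := by
      refine norm_tsum_eq_head (summable_series hdecay hz₀r) (C := C) (by simpa using hC) ?_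
      intro m
      rw [norm_mul, norm_pow]
      calc ‖a (m + 1)‖ * ‖z₀‖ ^ (m + 1)
          ≤ ‖a (m + 1)‖ * r ^ (m + 1) :=
            mul_le_mul_of_nonneg_left (pow_le_pow_left₀ (norm_nonneg _) hz₀r _) (norm_nonneg _)
        _ ≤ C := hCb m
    rw [hz₀, norm_zero, pow_zero, mul_one] at hhead
    linarith
  obtain ⟨N', rfl⟩ : ∃ N', N = N' + 1 := ⟨N - 1, by omega⟩
  clear hN
  have hposa : 0 < ‖a (N' + 1)‖ := by
    by_contra hc
    push_neg at hc
    nlinarith [pow_pos hr (N' + 1)]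
  set b : ℕ → k := fun n => ∑' m : ℕ, a (n + 1 + m) * z₀ ^ m with hb_def
  have hbsum : ∀ n, Summable (fun m => a (n + 1 + m) * z₀ ^ m) := by
    intro n
    apply summable_aux (t := fun m => ‖a (n + 1 + m)‖ * r ^ m)
      (shift_div hr (n + 1) hdecay)
    intro m
    rw [norm_mul, norm_pow]
    exact mul_le_mul_of_nonneg_left (pow_le_pow_left₀ (norm_nonneg _) hz₀r _) (norm_nonneg _)
  have hb_le : ∀ (n : ℕ) (C : ℝ), 0 ≤ C →
      (∀ m, ‖a (n + 1 + m)‖ * r ^ (n + 1 + m) ≤ C) → ‖b n‖ * r ^ (n + 1) ≤ C := by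
    intro n C hC0 hC
    have h1 : ‖b n‖ ≤ C / r ^ (n + 1) := by
      apply IsUltrametricDist.norm_tsum_le_of_forall_le_of_nonneg (by positivity)
      intro m
      rw [norm_mul, norm_pow]
      have h2 : ‖a (n + 1 + m)‖ * ‖z₀‖ ^ m ≤ ‖a (n + 1 + m)‖ * r ^ m :=
        mul_le_mul_of_nonneg_left (pow_le_pow_left₀ (norm_nonneg _) hz₀r _) (norm_nonneg _)
      refine h2.trans ?_
      rw [le_div_iff₀ (by positivity), mul_assoc, ← pow_add]
      calc ‖a (n + 1 + m)‖ * r ^ (m + (n + 1))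
          = ‖a (n + 1 + m)‖ * r ^ (n + 1 + m) := by congr 2; omega
        _ ≤ C := hC m
    calc ‖b n‖ * r ^ (n + 1) ≤ C / r ^ (n + 1) * r ^ (n + 1) :=
          mul_le_mul_of_nonneg_right h1 (by positivity)
      _ = C := div_mul_cancel₀ _ (by positivity)
  have hb_decay : Tendsto (fun n => ‖b n‖ * r ^ n) atTop (nhds 0) := by
    rw [Metric.tendsto_atTop]
    intro ε hε
    obtain ⟨J, hJ⟩ := Metric.tendsto_atTop.mp hdecay (ε * r / 2) (by positivity)
    refine ⟨J, fun n hn => ?_⟩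
    rw [Real.dist_eq, sub_zero, abs_of_nonneg (by positivity)]
    have h1 : ‖b n‖ * r ^ (n + 1) ≤ ε * r / 2 := by
      apply hb_le n _ (by positivity)
      intro m
      have h2 := hJ (n + 1 + m) (by omega)
      rw [Real.dist_eq, sub_zero] at h2
      exact (le_abs_self _).trans h2.le
    have h3 : ‖b n‖ * r ^ (n + 1) = ‖b n‖ * r ^ n * r := by rw [pow_succ]; ring
    rw [h3] at h1
    nlinarith [mul_nonneg (norm_nonneg (b n)) (pow_pos hr n).le]
  have hrec : ∀ n, b n = a (n + 1) + z₀ * b (n + 1) := by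
    intro n
    show (∑' m : ℕ, a (n + 1 + m) * z₀ ^ m)
      = a (n + 1) + z₀ * ∑' m : ℕ, a (n + 1 + 1 + m) * z₀ ^ m
    rw [Summable.tsum_eq_zero_add (hbsum n), ← tsum_mul_left]
    congr 1
    · simp
    · refine tsum_congr fun m => ?_
      have he : n + 1 + (m + 1) = n + 1 + 1 + m := by omega
      rw [he, pow_succ]
      ring
  have h00 : a 0 + z₀ * b 0 = 0 := by
    rw [← hz₀, Summable.tsum_eq_zero_add (summable_series hdecay hz₀r)]
    congr 1
    · simp
    · show z₀ * ∑' m : ℕ, a (0 + 1 + m) * z₀ ^ m = _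
      rw [← tsum_mul_left]
      refine tsum_congr fun m => ?_
      have he : 0 + 1 + m = m + 1 := by omega
      rw [he, pow_succ]
      ring
  have hfact : ∀ z : k, ‖z‖ ≤ r →
      ∑' n : ℕ, a n * z ^ n = (z - z₀) * ∑' n : ℕ, b n * z ^ n := by
    intro z hzr
    have hsa := summable_series hdecay hzr
    have hsb := summable_series hb_decay hzr
    have hsf : Summable (fun n => (a n + z₀ * b n) * z ^ n) :=
      (hsa.add (hsb.mul_left z₀)).congr (fun n => by ring)
    have key : (∑' n : ℕ, a n * z ^ n) + z₀ * ∑' n : ℕ, b n * z ^ n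
        = z * ∑' n : ℕ, b n * z ^ n := by
      calc (∑' n : ℕ, a n * z ^ n) + z₀ * ∑' n : ℕ, b n * z ^ n
          = ∑' n : ℕ, (a n + z₀ * b n) * z ^ n := by
            rw [← tsum_mul_left, ← Summable.tsum_add hsa (hsb.mul_left z₀)]
            exact tsum_congr fun n => by ring
        _ = ∑' n : ℕ, b n * z ^ (n + 1) := by
            rw [Summable.tsum_eq_zero_add hsf, h00, zero_mul, zero_add]
            exact tsum_congr fun n => by rw [hrec n]
        _ = z * ∑' n : ℕ, b n * z ^ n := by
            rw [← tsum_mul_left]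
            exact tsum_congr fun n => by rw [pow_succ]; ring
    linear_combination key
  have hlt : ∀ m, ‖a (N' + 1 + (m + 1))‖ * r ^ (m + 1) < ‖a (N' + 1)‖ := by
    intro m
    have h1 := hstrict (N' + 1 + (m + 1)) (by omega)
    have h2 : r ^ (N' + 1 + (m + 1)) = r ^ (m + 1) * r ^ (N' + 1) := by
      rw [← pow_add]; congr 1; omega
    rw [h2, ← mul_assoc] at h1
    exact (mul_lt_mul_iff_of_pos_right (pow_pos hr (N' + 1))).mp h1
  have hbN' : ‖b N'‖ = ‖a (N' + 1)‖ := by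
    obtain ⟨C, hC, hCb⟩ := exists_bound_lt
      (t := fun m => ‖a (N' + 1 + (m + 1))‖ * r ^ (m + 1))
      ((tail_decay (shift_div hr (N' + 1) hdecay) 1).congr fun m => by rw [add_comm 1 m])
      hposa hlt
    have hh : ‖∑' m : ℕ, a (N' + 1 + m) * z₀ ^ m‖ = ‖a (N' + 1 + 0) * z₀ ^ 0‖ := by
      refine norm_tsum_eq_head (hbsum N') (C := C) (by simpa using hC) ?_
      intro m
      rw [norm_mul, norm_pow]
      calc ‖a (N' + 1 + (m + 1))‖ * ‖z₀‖ ^ (m + 1)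
          ≤ ‖a (N' + 1 + (m + 1))‖ * r ^ (m + 1) :=
            mul_le_mul_of_nonneg_left (pow_le_pow_left₀ (norm_nonneg _) hz₀r _) (norm_nonneg _)
        _ ≤ C := hCb m
    rw [pow_zero, mul_one] at hh
    exact hh
  obtain ⟨C, hC, hCb⟩ := exists_bound_lt
    (t := fun m => ‖a (N' + 2 + m)‖ * r ^ (N' + 2 + m))
    (tail_decay hdecay (N' + 2)) hpos (fun m => hstrict _ (by omega))
  have hC0 : 0 ≤ C :=
    le_trans (by positivity : (0:ℝ) ≤ ‖a (N' + 2 + 0)‖ * r ^ (N' + 2 + 0)) (hCb 0)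
  have h_blt : ∀ n, N' + 1 ≤ n → ‖b n‖ * r ^ (n + 1) ≤ C := by
    intro n hn
    apply hb_le n C hC0
    intro m
    have he : n + 1 + m = N' + 2 + (n - (N' + 1) + m) := by omega
    rw [he]
    exact hCb _
  have hb_pos : 0 < ‖b N'‖ * r ^ N' := by
    rw [hbN']
    exact mul_pos hposa (pow_pos hr N')
  obtain ⟨N'', hN''pos, hN''max, hN''strict⟩ := exists_top hb_decay hb_pos
  have hN''lt : N'' < N' + 1 := by
    by_contra hcon
    push_neg at hcon
    have h1 : ‖b N''‖ * r ^ (N'' + 1) ≤ C := h_blt N'' (by omega)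
    have h3 := hN''max N'
    have h4 := mul_le_mul_of_nonneg_right h3 hr.le
    rw [mul_assoc, mul_assoc, ← pow_succ, ← pow_succ] at h4
    rw [hbN'] at h4
    linarith
  obtain ⟨P', b', hb'decay, hb'ne, hb'fact, hb'root⟩ :=
    IH N'' (by omega) b hb_decay hN''pos hN''max hN''strict
  refine ⟨(Polynomial.X - Polynomial.C z₀) * P', b', hb'decay, hb'ne, ?_, ?_⟩
  · intro z hzr
    rw [hfact z hzr, hb'fact z hzr, Polynomial.eval_mul, Polynomial.eval_sub,
      Polynomial.eval_X, Polynomial.eval_C]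
    ring
  · intro z
    constructor
    · intro hroot
      rw [Polynomial.IsRoot, Polynomial.eval_mul] at hroot
      rcases mul_eq_zero.mp hroot with h | h
      · have hzz : z = z₀ := by
          rw [Polynomial.eval_sub, Polynomial.eval_X, Polynomial.eval_C, sub_eq_zero] at h
          exact h
        rw [hzz]
        exact ⟨hz₀r, hz₀⟩
      · obtain ⟨hzr, hb0⟩ := (hb'root z).mp h
        exact ⟨hzr, by rw [hfact z hzr, hb0, mul_zero]⟩
    · rintro ⟨hzr, hf0⟩
      rw [hfact z hzr] at hf0
      rw [Polynomial.IsRoot, Polynomial.eval_mul]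
      rcases mul_eq_zero.mp hf0 with h | h
      · rw [Polynomial.eval_sub, Polynomial.eval_X, Polynomial.eval_C, h, zero_mul]
      · rw [Polynomial.IsRoot.eq_zero ((hb'root z).mpr ⟨hzr, h⟩), mul_zero]

end WeierstrassAux

/-- Weierstrass factorization on a non-Archimedean disc: a not-identically-zero power
series convergent on the closed disc of radius `r ∈ |k*|` with finitely many zeros
there factors as `f = P · u`, where `P` is a polynomial whose roots are exactly the
zeros of `f` in the disc and `u` is a convergent power series with no zeros in the
disc. -/
theorem weierstrass_factorization
    (k : Type*) [NontriviallyNormedField k] [IsAlgClosed k] [CompleteSpace k]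
    [IsUltrametricDist k]
    (a : ℕ → k) (c : k) (hc : c ≠ 0) (r : ℝ) (hr : r = ‖c‖)
    (hdecay : Tendsto (fun n => ‖a n‖ * r ^ n) atTop (nhds 0))
    (hne : ∃ n, a n ≠ 0)
    (hfin : {z : k | ‖z‖ ≤ r ∧ ∑' n : ℕ, a n * z ^ n = 0}.Finite) :
    ∃ (P : Polynomial k) (b : ℕ → k),
      Tendsto (fun n => ‖b n‖ * r ^ n) atTop (nhds 0) ∧
      (∀ z : k, ‖z‖ ≤ r → ∑' n : ℕ, b n * z ^ n ≠ 0) ∧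
      (∀ z : k, ‖z‖ ≤ r →
        ∑' n : ℕ, a n * z ^ n = P.eval z * ∑' n : ℕ, b n * z ^ n) ∧
      (∀ z : k, P.IsRoot z ↔ (‖z‖ ≤ r ∧ ∑' n : ℕ, a n * z ^ n = 0)) := by
  have hr0 : 0 < r := by rw [hr]; exact norm_pos_iff.mpr hc
  obtain ⟨n₀, hn₀⟩ := hne
  have hpos : 0 < ‖a n₀‖ * r ^ n₀ := mul_pos (norm_pos_iff.mpr hn₀) (pow_pos hr0 _)
  obtain ⟨N, hNpos, hNmax, hNstrict⟩ := WeierstrassAux.exists_top hdecay hpos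
  exact WeierstrassAux.main hr0 N a hdecay hNpos hNmax hNstrict
end
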